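/- Let g ≥ 1 be an integer and let Z be a symmetric g×g complex matrix whose imaginary part is positive definite. Then the Riemann theta function z ↦ θ(z; Z) = Σ_{n ∈ ℤ^g} exp(πi·ᵗn·Z·n + 2πi·ᵗn·z) is holomorphic on all of ℂ^g, i.e., the map (Fin g → ℂ) → ℂ given by this sum is ℂ-differentiable at every point. -/

import Mathlib

open Complex Finset Metric Matrix
open scoped Real

/-- Summability of products of a summable nonnegative function over pi types. -/
lemma summable_pi_prod_aux {h : ℤ → ℝ} (h0 : ∀ m, 0 ≤ h m) (hs : Summable h) :
    ∀ g : ℕ, Summable (fun n : Fin g → ℤ => ∏ j, h (n j)) := by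
  intro g
  induction g with
  | zero => exact Summable.of_finite
  | succ g ih =>
    have key : Summable (fun p : ℤ × (Fin g → ℤ) => h p.1 * ∏ j, h (p.2 j)) :=
      Summable.mul_of_nonneg (f := h) (g := fun n : Fin g → ℤ => ∏ j, h (n j)) hs ih (fun m => h0 m)
        (fun n => Finset.prod_nonneg fun j _ => h0 _)
    refine (Equiv.summable_iff (Fin.consEquiv (fun _ : Fin (g + 1) => ℤ))).mp ?_
    refine key.congr fun p => ?_
    show h p.1 * ∏ j, h (p.2 j) = ∏ j : Fin (g + 1), h (Fin.cons (α := fun _ => ℤ) p.1 p.2 j)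
    rw [Fin.prod_univ_succ]
    simp

/-- Coercivity of a positive definite real matrix. -/
lemma posdef_coercive {g : ℕ} (hg : 1 ≤ g) {M : Matrix (Fin g) (Fin g) ℝ}
    (hM : M.PosDef) :
    ∃ c > 0, ∀ x : Fin g → ℝ, c * ∑ j, (x j) ^ 2 ≤ ∑ j, ∑ k, x j * M j k * x k := by
  haveI : Nonempty (Fin g) := ⟨⟨0, hg⟩⟩
  set φ : (Fin g → ℝ) → ℝ := fun x => ∑ j, ∑ k, x j * M j k * x k with hφ
  have hquad : ∀ x, φ x = dotProduct x (M *ᵥ x) := by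
    intro x
    rw [hφ]
    simp only [dotProduct, Matrix.mulVec, Finset.mul_sum]
    exact Finset.sum_congr rfl fun j _ => Finset.sum_congr rfl fun k _ => by ring
  have hcont : Continuous φ := by
    apply continuous_finset_sum _ fun j _ => continuous_finset_sum _ fun k _ => ?_
    fun_prop
  have hsph : IsCompact (sphere (0 : Fin g → ℝ) 1) := isCompact_sphere 0 1
  have hne : (sphere (0 : Fin g → ℝ) 1).Nonempty :=
    NormedSpace.sphere_nonempty.mpr zero_le_one
  obtain ⟨x₀, hx₀mem, hx₀min⟩ := hsph.exists_isMinOn hne hcont.continuousOn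
  have hx₀norm : ‖x₀‖ = 1 := by simpa using hx₀mem
  have hx₀ne : x₀ ≠ 0 := by
    intro h; rw [h] at hx₀norm; simp at hx₀norm
  have hcpos : 0 < φ x₀ := by
    rw [hquad]
    have := hM.dotProduct_mulVec_pos hx₀ne
    simpa using this
  have hscale : ∀ (t : ℝ) (y : Fin g → ℝ), φ (t • y) = t ^ 2 * φ y := by
    intro t y
    simp only [φ, Pi.smul_apply, smul_eq_mul, Finset.mul_sum]
    exact Finset.sum_congr rfl fun j _ => Finset.sum_congr rfl fun k _ => by ring
  refine ⟨φ x₀ / g, div_pos hcpos (by exact_mod_cast Nat.pos_of_ne_zero (by omega)), ?_⟩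
  intro x
  rcases eq_or_ne x 0 with rfl | hx
  · simp [φ]
  · have hxn : 0 < ‖x‖ := norm_pos_iff.mpr hx
    have hy : ‖x‖⁻¹ • x ∈ sphere (0 : Fin g → ℝ) 1 := by
      simp [norm_smul, abs_of_pos (inv_pos.mpr hxn), inv_mul_cancel₀ hxn.ne']
    have h1 : φ x₀ ≤ φ (‖x‖⁻¹ • x) := hx₀min hy
    have h2 : φ x = ‖x‖ ^ 2 * φ (‖x‖⁻¹ • x) := by
      conv_lhs => rw [← smul_inv_smul₀ hxn.ne' x]
      rw [hscale]
    have h3 : ∑ j, (x j) ^ 2 ≤ g * ‖x‖ ^ 2 := by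
      calc ∑ j, (x j) ^ 2 ≤ ∑ _j : Fin g, ‖x‖ ^ 2 := by
            refine Finset.sum_le_sum fun j _ => ?_
            have := norm_le_pi_norm x j
            calc (x j) ^ 2 = ‖x j‖ ^ 2 := by rw [Real.norm_eq_abs, _root_.sq_abs]
              _ ≤ ‖x‖ ^ 2 := by
                  exact pow_le_pow_left₀ (norm_nonneg _) this 2
        _ = g * ‖x‖ ^ 2 := by simp [Finset.sum_const, nsmul_eq_mul]
    have hgpos : (0 : ℝ) < g := by exact_mod_cast Nat.pos_of_ne_zero (by omega)
    calc φ x₀ / g * ∑ j, (x j) ^ 2 ≤ φ x₀ / g * (g * ‖x‖ ^ 2) := by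
          apply mul_le_mul_of_nonneg_left h3 (le_of_lt (div_pos hcpos hgpos))
    _ = φ x₀ * ‖x‖ ^ 2 := by field_simp [hgpos.ne']
    _ ≤ φ (‖x‖⁻¹ • x) * ‖x‖ ^ 2 := by
          apply mul_le_mul_of_nonneg_right h1 (by positivity)
    _ = φ x := by rw [h2]; ring

/-- The Riemann theta function attached to a `g × g` complex matrix `Z`. -/
noncomputable def riemannTheta {g : ℕ} (Z : Matrix (Fin g) (Fin g) ℂ)
    (z : Fin g → ℂ) : ℂ :=
  ∑' n : Fin g → ℤ,
    Complex.exp ((Real.pi : ℂ) * Complex.I * (∑ j, ∑ k, (n j : ℂ) * Z j k * (n k : ℂ)) +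
      2 * (Real.pi : ℂ) * Complex.I * (∑ j, (n j : ℂ) * z j))

theorem riemannTheta_differentiable (g : ℕ) (hg : 1 ≤ g)
    (Z : Matrix (Fin g) (Fin g) ℂ) (hZsymm : Z.IsSymm)
    (hZim : (Z.map Complex.im).PosDef) :
    Differentiable ℂ (fun z : Fin g → ℂ => riemannTheta Z z) := by
  obtain ⟨c, hc, hcoer⟩ := posdef_coercive hg hZim
  intro z₀
  set R : ℝ := ‖z₀‖ + 1 with hR
  have hRpos : 0 < R := by positivity
  set b : ℝ := 2 * π * R + 2 * π with hb
  have hbpos : 0 < b := by positivity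
  set Q : (Fin g → ℤ) → ℂ := fun n => ∑ j, ∑ k, (n j : ℂ) * Z j k * (n k : ℂ) with hQ
  set L : (Fin g → ℤ) → (Fin g → ℂ) →L[ℂ] ℂ :=
    fun n => ∑ j, ((2 * (π : ℂ) * Complex.I) * (n j : ℂ)) •
      (ContinuousLinearMap.proj j : (Fin g → ℂ) →L[ℂ] ℂ) with hL
  set f : (Fin g → ℤ) → (Fin g → ℂ) → ℂ :=
    fun n z => Complex.exp ((π : ℂ) * Complex.I * Q n + L n z) with hf
  set u : (Fin g → ℤ) → ℝ :=
    fun n => Real.exp (-(π * c) * ∑ j, ((n j : ℝ)) ^ 2 + b * ∑ j, |(n j : ℝ)|) with hu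
  -- the linear part applied
  have hLapp : ∀ n (z : Fin g → ℂ),
      L n z = 2 * (π : ℂ) * Complex.I * ∑ j, (n j : ℂ) * z j := by
    intro n z
    rw [hL]
    simp only [ContinuousLinearMap.sum_apply, ContinuousLinearMap.smul_apply,
      ContinuousLinearMap.proj_apply, smul_eq_mul, Finset.mul_sum]
    exact Finset.sum_congr rfl fun j _ => by ring
  -- norm of the linear part
  have habs : ∀ n : ℤ, ‖(n : ℂ)‖ = |(n : ℝ)| := by
    intro n
    rw [← Complex.ofReal_intCast, Complex.norm_real, Real.norm_eq_abs]
  have hLnorm : ∀ n, ‖L n‖ ≤ 2 * π * ∑ j, |(n j : ℝ)| := by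
    intro n
    rw [hL]
    refine (norm_sum_le _ _).trans ?_
    rw [Finset.mul_sum]
    refine Finset.sum_le_sum fun j _ => ?_
    rw [norm_smul ((2 * (π : ℂ) * Complex.I) * (n j : ℂ))
      (ContinuousLinearMap.proj j : (Fin g → ℂ) →L[ℂ] ℂ)]
    have h1 : ‖(ContinuousLinearMap.proj j : (Fin g → ℂ) →L[ℂ] ℂ)‖ ≤ 1 :=
      ContinuousLinearMap.opNorm_le_bound _ zero_le_one fun z => by
        simpa using norm_le_pi_norm z j
    have h2 : ‖(2 * (π : ℂ) * Complex.I) * (n j : ℂ)‖ = 2 * π * |(n j : ℝ)| := by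
      rw [norm_mul, habs, norm_mul, norm_mul]
      simp [Real.pi_nonneg, Complex.norm_real, _root_.abs_of_nonneg Real.pi_nonneg]
    calc ‖(2 * (π : ℂ) * Complex.I) * (n j : ℂ)‖ *
          ‖(ContinuousLinearMap.proj j : (Fin g → ℂ) →L[ℂ] ℂ)‖
        ≤ ‖(2 * (π : ℂ) * Complex.I) * (n j : ℂ)‖ * 1 := by
          exact mul_le_mul_of_nonneg_left h1 (norm_nonneg _)
      _ = 2 * π * |(n j : ℝ)| := by rw [mul_one, h2]
  -- imaginary part of the quadratic form
  have hQim : ∀ n, (Q n).im = ∑ j, ∑ k, (n j : ℝ) * (Z j k).im * (n k : ℝ) := by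
    intro n
    rw [hQ]
    rw [Complex.im_sum]
    refine Finset.sum_congr rfl fun j _ => ?_
    rw [Complex.im_sum]
    refine Finset.sum_congr rfl fun k _ => ?_
    simp [Complex.mul_im, Complex.mul_re]
  have hQim_ge : ∀ n : Fin g → ℤ, c * ∑ j, ((n j : ℝ)) ^ 2 ≤ (Q n).im := by
    intro n
    rw [hQim]
    have := hcoer fun j => (n j : ℝ)
    simpa [Matrix.map_apply] using this
  -- norm of each term
  have hfnorm : ∀ n (z : Fin g → ℂ),
      ‖f n z‖ = Real.exp (-(π * (Q n).im) + (L n z).re) := by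
    intro n z
    rw [hf]
    rw [Complex.norm_exp]
    congr 1
    rw [Complex.add_re]
    congr 1
    simp [Complex.mul_re, Complex.mul_im]
  -- the bound on the ball
  have hball_norm : ∀ n (z : Fin g → ℂ), z ∈ ball (0 : Fin g → ℂ) R →
      ‖f n z‖ ≤ Real.exp (-(π * c) * ∑ j, ((n j : ℝ)) ^ 2 +
        2 * π * R * ∑ j, |(n j : ℝ)|) := by
    intro n z hz
    rw [hfnorm]
    apply Real.exp_le_exp.mpr
    have h1 : (L n z).re ≤ 2 * π * R * ∑ j, |(n j : ℝ)| := by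
      have h2 : (L n z).re ≤ ‖L n z‖ := Complex.re_le_norm _
      have h3 : ‖L n z‖ ≤ ‖L n‖ * ‖z‖ := (L n).le_opNorm z
      have h4 : ‖z‖ ≤ R := le_of_lt (mem_ball_zero_iff.mp hz)
      have h5 : ‖L n‖ * ‖z‖ ≤ (2 * π * ∑ j, |(n j : ℝ)|) * R := by
        apply mul_le_mul (hLnorm n) h4 (norm_nonneg _)
        positivity
      calc (L n z).re ≤ ‖L n z‖ := h2
        _ ≤ ‖L n‖ * ‖z‖ := h3
        _ ≤ (2 * π * ∑ j, |(n j : ℝ)|) * R := h5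
        _ = 2 * π * R * ∑ j, |(n j : ℝ)| := by ring
    have h6 : -(π * (Q n).im) ≤ -(π * (c * ∑ j, ((n j : ℝ)) ^ 2)) := by
      have := hQim_ge n
      nlinarith [Real.pi_pos]
    calc -(π * (Q n).im) + (L n z).re
        ≤ -(π * (c * ∑ j, ((n j : ℝ)) ^ 2)) + 2 * π * R * ∑ j, |(n j : ℝ)| := by
          exact add_le_add h6 h1
      _ = -(π * c) * ∑ j, ((n j : ℝ)) ^ 2 + 2 * π * R * ∑ j, |(n j : ℝ)| := by ring
  have hbound : ∀ n (z : Fin g → ℂ), z ∈ ball (0 : Fin g → ℂ) R →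
      ‖f n z • L n‖ ≤ u n := by
    intro n z hz
    rw [norm_smul (f n z) (L n)]
    have h1 := hball_norm n z hz
    have h2 : ‖L n‖ ≤ Real.exp (2 * π * ∑ j, |(n j : ℝ)|) := by
      refine (hLnorm n).trans ?_
      have := Real.add_one_le_exp (2 * π * ∑ j, |(n j : ℝ)|)
      linarith
    calc ‖f n z‖ * ‖L n‖
        ≤ Real.exp (-(π * c) * ∑ j, ((n j : ℝ)) ^ 2 + 2 * π * R * ∑ j, |(n j : ℝ)|) *
          Real.exp (2 * π * ∑ j, |(n j : ℝ)|) := by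
          exact mul_le_mul h1 h2 (norm_nonneg _) (Real.exp_nonneg _)
      _ = u n := by
          rw [← Real.exp_add, hu, hb]
          congr 1
          ring
  -- summability of the bound
  have hsum_u : Summable u := by
    have hh : Summable (fun m : ℤ => Real.exp (-(π * c) * ((m : ℝ)) ^ 2 + b * |(m : ℝ)|)) := by
      have hjac := summable_pow_mul_jacobiTheta₂_term_bound (b / (2 * π)) hc 0
      refine hjac.congr fun m => ?_
      rw [pow_zero, one_mul]
      congr 1
      have hpi : (π : ℝ) ≠ 0 := Real.pi_ne_zero
      push_cast
      field_simp
      ring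
    have := summable_pi_prod_aux
      (h := fun m => Real.exp (-(π * c) * ((m : ℝ)) ^ 2 + b * |(m : ℝ)|))
      (fun m => Real.exp_nonneg _) hh g
    refine this.congr fun n => ?_
    rw [← Real.exp_sum]
    rw [hu]
    congr 1
    rw [Finset.sum_add_distrib, ← Finset.mul_sum, ← Finset.mul_sum]
  -- summability at the center
  have hf0 : Summable (fun n => f n (0 : Fin g → ℂ)) := by
    refine Summable.of_norm_bounded hsum_u fun n => ?_
    have h1 := hball_norm n 0 (mem_ball_self hRpos)
    refine h1.trans ?_
    apply Real.exp_le_exp.mpr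
    have hnn : 0 ≤ ∑ j, |(n j : ℝ)| := Finset.sum_nonneg fun j _ => abs_nonneg _
    have h2 : 2 * π * R * ∑ j, |(n j : ℝ)| ≤ b * ∑ j, |(n j : ℝ)| := by
      rw [hb]
      nlinarith [Real.pi_pos]
    linarith
  -- each term is differentiable
  have hfd : ∀ (n : Fin g → ℤ) (z : Fin g → ℂ), HasFDerivAt (f n) (f n z • L n) z := by
    intro n z
    have h1 : HasFDerivAt (fun z : Fin g → ℂ => (π : ℂ) * Complex.I * Q n + L n z)
        (L n) z := (L n).hasFDerivAt.const_add _
    exact h1.cexp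
  -- apply the series differentiation theorem
  have hz₀ : z₀ ∈ ball (0 : Fin g → ℂ) R := by
    rw [mem_ball_zero_iff, hR]
    linarith
  have key := hasFDerivAt_tsum_of_isPreconnected hsum_u isOpen_ball
    (convex_ball (0 : Fin g → ℂ) R).isPreconnected
    (fun n x _ => hfd n x) (fun n x hx => hbound n x hx)
    (mem_ball_self hRpos) hf0 hz₀
  have hdiff : DifferentiableAt ℂ (fun y => ∑' n, f n y) z₀ := key.differentiableAt
  have heq : (fun z : Fin g → ℂ => riemannTheta Z z) = fun y => ∑' n, f n y := by
    funext y
    unfold riemannTheta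
    refine tsum_congr fun n => ?_
    simp only [hf, hQ]
    rw [hLapp]
  rw [heq]
  exact hdiff
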